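/- Let q > 0 and let E_1,...,E_k be non-negative linear combinations of unconditioned entropy terms, i.e., E_ℓ(h) = Σ_j d_{ℓ,j}·h(Y_{ℓ,j}) with d_{ℓ,j} ≥ 0. If the inequality q·h([n]) ≤ max_{ℓ∈[k]} E_ℓ(h) holds for every modular function h with non-negative singleton values, then it holds for every polymatroid h. -/
import Mathlib


/-- A polymatroid on `[n]`: non-negative, zero on `∅`, monotone and submodular. -/
def IsPolymatroid {n : ℕ} (h : Finset (Fin n) → ℝ) : Prop :=
  h ∅ = 0 ∧ (∀ X, 0 ≤ h X) ∧
    (∀ X Y : Finset (Fin n), h X ≤ h (X ∪ Y)) ∧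
    (∀ X Y : Finset (Fin n), h (X ∪ Y) + h (X ∩ Y) ≤ h X + h Y)

/-- A modular function: `h(X) = Σ_{i ∈ X} h({i})`. -/
def IsModular {n : ℕ} (h : Finset (Fin n) → ℝ) : Prop :=
  ∀ X : Finset (Fin n), h X = ∑ i ∈ X, h {i}

/-- Unconditioned max-inequalities are essentially-Shannon: if
`q·h([n]) ≤ max_ℓ Σ_j d_{ℓ,j}·h(Y_{ℓ,j})` holds for all modular functions with non-negative
singleton values, then it holds for all polymatroids. -/
theorem unconditioned_max_inequality_essentially_shannon {n k m : ℕ} (q : ℝ) (hq : 0 < q)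
    (d : Fin k → Fin m → ℝ) (hd : ∀ ℓ j, 0 ≤ d ℓ j)
    (Ys : Fin k → Fin m → Finset (Fin n))
    (hmodular : ∀ h : Finset (Fin n) → ℝ, IsModular h → (∀ i : Fin n, 0 ≤ h {i}) →
      ∃ ℓ : Fin k, q * h Finset.univ ≤ ∑ j, d ℓ j * h (Ys ℓ j))
    (h : Finset (Fin n) → ℝ) (hp : IsPolymatroid h) :
    ∃ ℓ : Fin k, q * h Finset.univ ≤ ∑ j, d ℓ j * h (Ys ℓ j) := by
  obtain ⟨hempty, hnonneg, hmono, hsubmod⟩ := hp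
  set a : Fin n → ℝ := fun i => h (Finset.Iic i) - h (Finset.Iio i) with ha
  set g : Finset (Fin n) → ℝ := fun X => ∑ i ∈ X, a i with hg
  -- telescoping identity
  have key : ∀ Y : Finset (Fin n),
      ∑ i ∈ Y, (h (Y ∩ Finset.Iic i) - h (Y ∩ Finset.Iio i)) = h Y := by
    intro Y
    have hIic : ∀ i : Fin n,
        Y ∩ Finset.Iic i = Y.filter (fun j : Fin n => (j : ℕ) < i.val + 1) := by
      intro i; ext j
      simp only [Finset.mem_inter, Finset.mem_Iic, Finset.mem_filter, Fin.le_def,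
        Nat.lt_succ_iff]
    have hIio : ∀ i : Fin n,
        Y ∩ Finset.Iio i = Y.filter (fun j : Fin n => (j : ℕ) < i.val) := by
      intro i; ext j
      simp only [Finset.mem_inter, Finset.mem_Iio, Finset.mem_filter, Fin.lt_def]
    have hstep : ∑ i ∈ Y, (h (Y ∩ Finset.Iic i) - h (Y ∩ Finset.Iio i))
        = ∑ i : Fin n, (h (Y.filter (fun j : Fin n => (j : ℕ) < i.val + 1))
            - h (Y.filter (fun j : Fin n => (j : ℕ) < i.val))) := by
      rw [← Finset.sum_subset (Finset.subset_univ Y)]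
      · exact Finset.sum_congr rfl fun i _ => by rw [hIic, hIio]
      · intro i _ hiY
        have heq : Y.filter (fun j : Fin n => (j : ℕ) < i.val + 1)
            = Y.filter (fun j : Fin n => (j : ℕ) < i.val) := by
          ext j
          simp only [Finset.mem_filter, Nat.lt_succ_iff]
          constructor
          · rintro ⟨hjY, hj⟩
            refine ⟨hjY, lt_of_le_of_ne hj fun hje => ?_⟩
            exact hiY ((Fin.val_injective hje : j = i) ▸ hjY)
          · exact fun ⟨hjY, hj⟩ => ⟨hjY, le_of_lt hj⟩
        rw [heq, sub_self]
    rw [hstep,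
      Fin.sum_univ_eq_sum_range
        (fun t => h (Y.filter (fun j : Fin n => (j : ℕ) < t + 1))
          - h (Y.filter (fun j : Fin n => (j : ℕ) < t))),
      Finset.sum_range_sub (fun t => h (Y.filter (fun j : Fin n => (j : ℕ) < t)))]
    have hFn : Y.filter (fun j : Fin n => (j : ℕ) < n) = Y := by
      ext j; simp [j.isLt]
    have hF0 : Y.filter (fun j : Fin n => (j : ℕ) < 0) = ∅ := by
      ext j; simp
    rw [hFn, hF0, hempty, sub_zero]
  -- g ≤ h pointwise
  have hgle : ∀ Y : Finset (Fin n), g Y ≤ h Y := by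
    intro Y
    rw [hg, ← key Y]
    apply Finset.sum_le_sum
    intro i hi
    have hu : (Y ∩ Finset.Iic i) ∪ Finset.Iio i = Finset.Iic i := by
      ext j
      simp only [Finset.mem_union, Finset.mem_inter, Finset.mem_Iic, Finset.mem_Iio]
      constructor
      · rintro (⟨_, hj⟩ | hj)
        · exact hj
        · exact le_of_lt hj
      · intro hj
        rcases lt_or_eq_of_le hj with hlt | hje
        · exact Or.inr hlt
        · exact Or.inl ⟨hje ▸ hi, hj⟩
    have hi' : (Y ∩ Finset.Iic i) ∩ Finset.Iio i = Y ∩ Finset.Iio i := by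
      ext j
      simp only [Finset.mem_inter, Finset.mem_Iic, Finset.mem_Iio]
      exact ⟨fun ⟨⟨h1, _⟩, h3⟩ => ⟨h1, h3⟩, fun ⟨h1, h3⟩ => ⟨⟨h1, le_of_lt h3⟩, h3⟩⟩
    have hsm := hsubmod (Y ∩ Finset.Iic i) (Finset.Iio i)
    rw [hu, hi'] at hsm
    simp only [ha]
    linarith
  -- g univ = h univ
  have hguniv : g Finset.univ = h Finset.univ := by
    rw [hg, ← key Finset.univ]
    exact Finset.sum_congr rfl fun i _ => by simp [ha, Finset.univ_inter]
  have hgsingle : ∀ i : Fin n, g {i} = a i := fun i => by simp [hg]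
  have hgmod : IsModular g := by
    intro X
    simp only [hg]
    exact Finset.sum_congr rfl fun i _ => (Finset.sum_singleton a i).symm
  have hgnn : ∀ i : Fin n, 0 ≤ g {i} := by
    intro i
    rw [hgsingle]
    have hm := hmono (Finset.Iio i) (Finset.Iic i)
    have hun : Finset.Iio i ∪ Finset.Iic i = Finset.Iic i :=
      Finset.union_eq_right.mpr Finset.Iio_subset_Iic_self
    rw [hun] at hm
    simp only [ha]
    linarith
  obtain ⟨ℓ, hℓ⟩ := hmodular g hgmod hgnn
  refine ⟨ℓ, ?_⟩
  calc q * h Finset.univ = q * g Finset.univ := by rw [hguniv]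
    _ ≤ ∑ j, d ℓ j * g (Ys ℓ j) := hℓ
    _ ≤ ∑ j, d ℓ j * h (Ys ℓ j) :=
        Finset.sum_le_sum fun j _ => mul_le_mul_of_nonneg_left (hgle _) (hd ℓ j)
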